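/- Let C be a full commutative C*-category. The Gelfand transform G_C : C → Γ(Σ(C)), sending x ∈ C_{BA} to the section [ω] ↦ x + I_ω (the class of x in the fiber C_{BA}/(I_ω ∩ C_{BA})), is a faithful *-functor that is isometric on every Hom space: ‖G_C(x)‖ = ‖x‖. -/

import Mathlib

open ComplexConjugate

/-- A C*-category: Hom spaces are complex Banach spaces, composition is bilinear and
submultiplicative, and there is an antilinear involutive contravariant *-operation fixing
objects, satisfying the C*-identity and positivity. -/
class CStarCat (O : Type*) (Hom : O → O → Type*)
    [∀ A B, NormedAddCommGroup (Hom A B)] [∀ A B, NormedSpace ℂ (Hom A B)] where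
  complete : ∀ A B, CompleteSpace (Hom A B)
  comp : ∀ {A B C : O}, Hom A B → Hom B C → Hom A C
  ide : ∀ A : O, Hom A A
  comp_assoc : ∀ {A B C D : O} (x : Hom A B) (y : Hom B C) (z : Hom C D),
      comp (comp x y) z = comp x (comp y z)
  ide_comp : ∀ {A B : O} (x : Hom A B), comp (ide A) x = x
  comp_ide : ∀ {A B : O} (x : Hom A B), comp x (ide B) = x
  comp_add_left : ∀ {A B C : O} (x y : Hom A B) (z : Hom B C),
      comp (x + y) z = comp x z + comp y z
  comp_add_right : ∀ {A B C : O} (x : Hom A B) (y z : Hom B C),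
      comp x (y + z) = comp x y + comp x z
  comp_smul_left : ∀ {A B C : O} (c : ℂ) (x : Hom A B) (z : Hom B C),
      comp (c • x) z = c • comp x z
  comp_smul_right : ∀ {A B C : O} (c : ℂ) (x : Hom A B) (z : Hom B C),
      comp x (c • z) = c • comp x z
  norm_comp_le : ∀ {A B C : O} (x : Hom A B) (y : Hom B C), ‖comp x y‖ ≤ ‖x‖ * ‖y‖
  invol : ∀ {A B : O}, Hom A B → Hom B A
  invol_invol : ∀ {A B : O} (x : Hom A B), invol (invol x) = x
  invol_add : ∀ {A B : O} (x y : Hom A B), invol (x + y) = invol x + invol y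
  invol_smul : ∀ {A B : O} (c : ℂ) (x : Hom A B), invol (c • x) = (conj c) • invol x
  invol_comp : ∀ {A B C : O} (x : Hom A B) (y : Hom B C),
      invol (comp x y) = comp (invol y) (invol x)
  norm_invol_comp : ∀ {A B : O} (x : Hom A B), ‖comp (invol x) x‖ = ‖x‖ ^ 2
  pos : ∀ {A B : O} (x : Hom A B), ∃ y : Hom B B, comp (invol x) x = comp (invol y) y

/-- A ℂ-valued *-functor on a C*-category (ℂ viewed as a one-object C*-category). -/
structure CChar (O : Type*) (Hom : O → O → Type*)
    [∀ A B, NormedAddCommGroup (Hom A B)] [∀ A B, NormedSpace ℂ (Hom A B)]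
    [CStarCat O Hom] where
  ω : ∀ {A B : O}, Hom A B → ℂ
  map_add : ∀ {A B : O} (x y : Hom A B), ω (x + y) = ω x + ω y
  map_smul : ∀ {A B : O} (c : ℂ) (x : Hom A B), ω (c • x) = c * ω x
  map_comp : ∀ {A B C : O} (x : Hom A B) (y : Hom B C),
      ω (CStarCat.comp x y) = ω x * ω y
  map_ide : ∀ A : O, ω (CStarCat.ide A) = 1
  map_invol : ∀ {A B : O} (x : Hom A B), ω (CStarCat.invol x) = conj (ω x)

/-- Unitary equivalence of ℂ-valued *-functors, by a unitary natural transformation. -/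
def UnitEquiv {O : Type*} {Hom : O → O → Type*}
    [∀ A B, NormedAddCommGroup (Hom A B)] [∀ A B, NormedSpace ℂ (Hom A B)]
    [CStarCat O Hom] (ω ω' : CChar O Hom) : Prop :=
  ∃ ν : O → ℂ, (∀ A, ‖ν A‖ = 1) ∧
    ∀ {A B : O} (x : Hom A B), ω'.ω x * ν B = ν A * ω.ω x

/-- A C*-category is commutative if every diagonal block is a commutative C*-algebra. -/
def IsCommutative (O : Type*) (Hom : O → O → Type*)
    [∀ A B, NormedAddCommGroup (Hom A B)] [∀ A B, NormedSpace ℂ (Hom A B)]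
    [CStarCat O Hom] : Prop :=
  ∀ (A : O) (x y : Hom A A), CStarCat.comp x y = CStarCat.comp y x

/-- A C*-category is full if for all objects A, B the span of the products
C_{AB} ∘ C_{BA} is dense in C_{AA} (imprimitivity of the off-diagonal bimodules). -/
def IsFull (O : Type*) (Hom : O → O → Type*)
    [∀ A B, NormedAddCommGroup (Hom A B)] [∀ A B, NormedSpace ℂ (Hom A B)]
    [CStarCat O Hom] : Prop :=
  ∀ A B : O,
    closure ((Submodule.span ℂ
      {z : Hom A A | ∃ (x : Hom A B) (y : Hom B A), z = CStarCat.comp x y} :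
        Submodule ℂ (Hom A A)) : Set (Hom A A)) = Set.univ

variable {O : Type*} {Hom : O → O → Type*}
  [∀ A B, NormedAddCommGroup (Hom A B)] [∀ A B, NormedSpace ℂ (Hom A B)]
  [CStarCat O Hom]

/-- The kernel ideal I_ω of a ℂ-valued *-functor ω, intersected with the Hom space
C_{AB}, as a submodule; the fiber of the spectral spaceoid over ([ω],(A,B)) is the
quotient by this submodule. -/
def kerIdeal (ω : CChar O Hom) (A B : O) : Submodule ℂ (Hom A B) where
  carrier := {x | ω.ω x = 0}
  add_mem' := by
    intro a b ha hb
    simp only [Set.mem_setOf_eq] at *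
    rw [ω.map_add, ha, hb, add_zero]
  zero_mem' := by
    have h := ω.map_smul (A := A) (B := B) 0 0
    simpa using h
  smul_mem' := by
    intro c x hx
    simp only [Set.mem_setOf_eq] at *
    rw [ω.map_smul, hx, mul_zero]
section AuxGelfand

open CStarCat

variable {O : Type*} {Hom : O → O → Type*}
  [∀ A B, NormedAddCommGroup (Hom A B)] [∀ A B, NormedSpace ℂ (Hom A B)]
  [CStarCat O Hom]

theorem comp_zero_left' {A B C : O} (z : Hom B C) : comp (0 : Hom A B) z = 0 :=
  add_eq_right.mp (by rw [← CStarCat.comp_add_left, add_zero])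

theorem comp_zero_right' {A B C : O} (x : Hom A B) : comp x (0 : Hom B C) = 0 :=
  add_eq_right.mp (by rw [← CStarCat.comp_add_right, add_zero])

theorem invol_zero' {A B : O} : invol (0 : Hom A B) = (0 : Hom B A) :=
  add_eq_right.mp (by rw [← invol_add, add_zero])

theorem invol_ide' (B : O) : invol (ide B : Hom B B) = ide B := by
  have key : ∀ (C : O) (y : Hom C B), comp y (invol (ide B : Hom B B)) = y := by
    intro C y
    have h := congrArg (invol (Hom := Hom)) (ide_comp (invol y))
    rwa [invol_comp, invol_invol] at h
  have h1 := key B (ide B)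
  have h2 := ide_comp (Hom := Hom) (invol (ide B : Hom B B))
  rw [h2] at h1
  exact h1

theorem cchar_map_zero (ω : CChar O Hom) {A B : O} : ω.ω (0 : Hom A B) = 0 := by
  have h := ω.map_add (0 : Hom A B) 0
  rw [add_zero] at h
  exact (left_eq_add.mp h)

theorem cchar_map_sub (ω : CChar O Hom) {A B : O} (x y : Hom A B) :
    ω.ω (x - y) = ω.ω x - ω.ω y := by
  have h := ω.map_add (x - y) y
  rw [sub_add_cancel] at h
  rw [h]; ring

end AuxGelfand
section DiagAlg

open CStarCat

variable {O : Type*} {Hom : O → O → Type*}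
  [∀ A B, NormedAddCommGroup (Hom A B)] [∀ A B, NormedSpace ℂ (Hom A B)]
  [CStarCat O Hom]

variable (Hom) in
/-- Type synonym for the diagonal hom-space `Hom A A`, carrying its C*-algebra structure. -/
def Diag (A : O) : Type _ := Hom A A

instance instDiagNACG (A : O) : NormedAddCommGroup (Diag Hom A) :=
  inferInstanceAs (NormedAddCommGroup (Hom A A))

instance instDiagNS (A : O) : NormedSpace ℂ (Diag Hom A) :=
  inferInstanceAs (NormedSpace ℂ (Hom A A))

instance instDiagComplete (A : O) : CompleteSpace (Diag Hom A) :=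
  CStarCat.complete (Hom := Hom) A A

instance instDiagRing (A : O) : Ring (Diag Hom A) :=
  { (inferInstanceAs (AddCommGroup (Diag Hom A)) : AddCommGroup (Diag Hom A)) with
    mul := fun x y => (comp (Hom := Hom) x y : Hom A A)
    one := (ide A : Hom A A)
    mul_assoc := fun x y z => comp_assoc (Hom := Hom) x y z
    one_mul := fun x => ide_comp (Hom := Hom) x
    mul_one := fun x => comp_ide (Hom := Hom) x
    left_distrib := fun x y z => comp_add_right (Hom := Hom) x y z
    right_distrib := fun x y z => comp_add_left (Hom := Hom) x y z
    zero_mul := fun x => comp_zero_left' x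
    mul_zero := fun x => comp_zero_right' x }

noncomputable instance instDiagAlgebra (A : O) : Algebra ℂ (Diag Hom A) :=
  Algebra.ofModule (fun c x y => comp_smul_left (Hom := Hom) c x y)
    (fun c x y => comp_smul_right (Hom := Hom) c x y)

instance instDiagStarRing (A : O) : StarRing (Diag Hom A) where
  star x := (invol (Hom := Hom) x : Hom A A)
  star_involutive := fun x => invol_invol (Hom := Hom) x
  star_mul := fun x y => invol_comp (Hom := Hom) x y
  star_add := fun x y => invol_add (Hom := Hom) x y

instance instDiagStarModule (A : O) : StarModule ℂ (Diag Hom A) where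
  star_smul c x := by
    have h := invol_smul (Hom := Hom) c x
    show CStarCat.invol (c • x) = star c • CStarCat.invol x
    rw [starRingEnd_apply] at h
    exact h

noncomputable instance instDiagNormedRing (A : O) : NormedRing (Diag Hom A) :=
  { instDiagNACG (Hom := Hom) A, instDiagRing (Hom := Hom) A with
    dist_eq := fun x y => by rw [neg_add_eq_sub, dist_comm, dist_eq_norm]
    norm_mul_le := fun x y => norm_comp_le (Hom := Hom) x y }

noncomputable instance instDiagNormedAlgebra (A : O) : NormedAlgebra ℂ (Diag Hom A) :=
  { instDiagAlgebra (Hom := Hom) A with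
    norm_smul_le := fun c x => norm_smul_le c x }

instance instDiagCStarRing (A : O) : CStarRing (Diag Hom A) where
  norm_mul_self_le x := by
    have h : ‖x‖ * ‖x‖ = ‖star x * x‖ := by
      have h := norm_invol_comp (Hom := Hom) x
      calc ‖x‖ * ‖x‖ = ‖x‖ ^ 2 := by ring
        _ = ‖CStarCat.comp (CStarCat.invol x) x‖ := h.symm
        _ = ‖star x * x‖ := rfl
    exact le_of_eq h

noncomputable instance instDiagCStarAlgebra (A : O) : CStarAlgebra (Diag Hom A) :=
  { instDiagNormedRing (Hom := Hom) A, instDiagStarRing (Hom := Hom) A,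
    instDiagCStarRing (Hom := Hom) A, instDiagNormedAlgebra (Hom := Hom) A,
    instDiagStarModule (Hom := Hom) A, instDiagComplete (Hom := Hom) A with }

end DiagAlg
section InnerChar

open CStarCat WeakDual

variable {O : Type*} {Hom : O → O → Type*}
  [∀ A B, NormedAddCommGroup (Hom A B)] [∀ A B, NormedSpace ℂ (Hom A B)]
  [CStarCat O Hom]

variable (Z : O) (φ : characterSpace ℂ (Diag Hom Z))

/-- The localized inner product on `Hom A Z` induced by the character `φ`. -/
noncomputable def inn {A : O} (y z : Hom A Z) : ℂ :=
  φ ((comp (invol y) z : Hom Z Z) : Diag Hom Z)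

variable {Z}

theorem phi_comp (x y : Hom Z Z) :
    φ ((comp x y : Hom Z Z) : Diag Hom Z)
      = φ ((x : Hom Z Z) : Diag Hom Z) * φ ((y : Hom Z Z) : Diag Hom Z) :=
  map_mul φ _ _

theorem phi_one : φ ((ide Z : Hom Z Z) : Diag Hom Z) = 1 := map_one φ

theorem phi_star (x : Hom Z Z) :
    φ ((invol x : Hom Z Z) : Diag Hom Z) = conj (φ ((x : Hom Z Z) : Diag Hom Z)) := by
  rw [starRingEnd_apply]
  exact map_star φ _

theorem phi_smul (c : ℂ) (x : Hom Z Z) :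
    φ ((c • x : Hom Z Z) : Diag Hom Z) = c * φ ((x : Hom Z Z) : Diag Hom Z) := by
  rw [← smul_eq_mul]
  exact map_smul φ c _

theorem inn_conj {A : O} (y z : Hom A Z) : conj (inn Z φ y z) = inn Z φ z y := by
  unfold inn
  rw [← phi_star]
  congr 1
  rw [invol_comp, invol_invol]

theorem inn_add_right {A : O} (y z z' : Hom A Z) :
    inn Z φ y (z + z') = inn Z φ y z + inn Z φ y z' := by
  unfold inn
  rw [CStarCat.comp_add_right]
  exact map_add φ _ _

theorem inn_add_left {A : O} (y y' z : Hom A Z) :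
    inn Z φ (y + y') z = inn Z φ y z + inn Z φ y' z := by
  unfold inn
  rw [invol_add, CStarCat.comp_add_left]
  exact map_add φ _ _

theorem inn_smul_right {A : O} (c : ℂ) (y z : Hom A Z) :
    inn Z φ y (c • z) = c * inn Z φ y z := by
  unfold inn
  rw [CStarCat.comp_smul_right, phi_smul]

theorem inn_smul_left {A : O} (c : ℂ) (y z : Hom A Z) :
    inn Z φ (c • y) z = conj c * inn Z φ y z := by
  unfold inn
  rw [invol_smul, CStarCat.comp_smul_left, phi_smul]

theorem inn_sub_right {A : O} (y z z' : Hom A Z) :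
    inn Z φ y (z - z') = inn Z φ y z - inn Z φ y z' := by
  have h : z - z' = z + (-1 : ℂ) • z' := by rw [neg_one_smul, ← sub_eq_add_neg]
  rw [h, inn_add_right, inn_smul_right]; ring

theorem inn_sub_left {A : O} (y y' z : Hom A Z) :
    inn Z φ (y - y') z = inn Z φ y z - inn Z φ y' z := by
  have h : y - y' = y + (-1 : ℂ) • y' := by rw [neg_one_smul, ← sub_eq_add_neg]
  rw [h, inn_add_left, inn_smul_left]
  simp; ring

theorem inn_self_real {A : O} (y : Hom A Z) :
    ∃ r : ℝ, 0 ≤ r ∧ inn Z φ y y = (r : ℂ) := by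
  obtain ⟨w, hw⟩ := CStarCat.pos (Hom := Hom) y
  refine ⟨Complex.normSq (φ ((w : Hom Z Z) : Diag Hom Z)), Complex.normSq_nonneg _, ?_⟩
  unfold inn
  rw [hw, phi_comp, phi_star]
  rw [Complex.normSq_eq_conj_mul_self]

theorem inn_degenerate {A : O} {y : Hom A Z} (h : inn Z φ y y = 0) (z : Hom A Z) :
    inn Z φ y z = 0 := by
  by_contra hα
  set α := inn Z φ y z with hαdef
  obtain ⟨b, hb0, hb⟩ := inn_self_real φ z
  have hzy : inn Z φ z y = conj α := by rw [hαdef, inn_conj]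
  have key : ∀ t : ℝ, (0 : ℝ) ≤ b - 2 * t * Complex.normSq α := by
    intro t
    set s : ℂ := (t : ℂ) * α with hs
    have hexp : inn Z φ (z - s • y) (z - s • y)
        = ((b - 2 * t * Complex.normSq α : ℝ) : ℂ) := by
      rw [inn_sub_left, inn_sub_right, inn_sub_right, inn_smul_left, inn_smul_right,
        inn_smul_right, inn_smul_left, h, hb, hzy, ← hαdef]
      have h1 : conj s = (t : ℂ) * conj α := by
        rw [hs, map_mul, Complex.conj_ofReal]
      rw [h1]
      have h2 : α * conj α = (Complex.normSq α : ℂ) := Complex.mul_conj α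
      have h3 : conj α * α = (Complex.normSq α : ℂ) := by rw [mul_comm]; exact h2
      push_cast
      linear_combination (-(t : ℂ)) * h2 + (-(t : ℂ)) * h3
    obtain ⟨r, hr0, hr⟩ := inn_self_real φ (z - s • y)
    have : ((r : ℝ) : ℂ) = ((b - 2 * t * Complex.normSq α : ℝ) : ℂ) := by
      rw [← hr, hexp]
    have := Complex.ofReal_inj.mp this
    linarith
  have hn : 0 < Complex.normSq α := Complex.normSq_pos.mpr hα
  have hkey := key ((b + 1) / (2 * Complex.normSq α))
  have h2 : 2 * ((b + 1) / (2 * Complex.normSq α)) * Complex.normSq α = b + 1 := by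
    field_simp
  rw [h2] at hkey
  linarith

theorem inn_degenerate' {A : O} {y : Hom A Z} (h : inn Z φ y y = 0) (z : Hom A Z) :
    inn Z φ z y = 0 := by
  rw [← inn_conj, inn_degenerate φ h z, map_zero]

theorem inn_rankone {B : O} (hcB : ∀ x y : Hom B B, comp x y = comp y x)
    {e u : Hom B Z} (he : inn Z φ e e = 1) (h0 : inn Z φ e u = 0) :
    inn Z φ u u = 0 := by
  have h1 : comp (comp u (invol e)) (comp e (invol e)) =
      comp (comp e (invol e)) (comp u (invol e)) := hcB _ _
  have key : comp (comp (invol u) u) (comp (comp (invol e) e) (comp (invol e) e))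
      = comp (comp (invol u) e) (comp (comp (invol e) u) (comp (invol e) e)) := by
    calc comp (comp (invol u) u) (comp (comp (invol e) e) (comp (invol e) e))
        = comp (invol u) (comp (comp (comp u (invol e)) (comp e (invol e))) e) := by
          simp only [comp_assoc]
      _ = comp (invol u) (comp (comp (comp e (invol e)) (comp u (invol e))) e) := by rw [h1]
      _ = comp (comp (invol u) e) (comp (comp (invol e) u) (comp (invol e) e)) := by
          simp only [comp_assoc]
  have happ := congrArg (fun d : Hom Z Z => φ ((d : Hom Z Z) : Diag Hom Z)) key
  rw [phi_comp, phi_comp, phi_comp, phi_comp] at happ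
  have hLHS : inn Z φ u u * (inn Z φ e e * inn Z φ e e)
      = inn Z φ u e * (inn Z φ e u * inn Z φ e e) := happ
  rw [he, h0, mul_one, mul_one, zero_mul, mul_zero] at hLHS
  exact hLHS

theorem exists_unit_vec (A : O)
    (hfZA : closure ((Submodule.span ℂ
      {z : Hom Z Z | ∃ (x : Hom Z A) (y : Hom A Z), z = CStarCat.comp x y} :
        Submodule ℂ (Hom Z Z)) : Set (Hom Z Z)) = Set.univ) :
    ∃ e : Hom A Z, inn Z φ e e = 1 := by
  have hnz : ∃ u : Hom A Z, inn Z φ u u ≠ 0 := by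
    by_contra hall
    push_neg at hall
    set K : Submodule ℂ (Hom Z Z) :=
      { carrier := {d : Hom Z Z | φ ((d : Hom Z Z) : Diag Hom Z) = 0}
        add_mem' := by
          intro a b ha hb
          simp only [Set.mem_setOf_eq] at *
          exact (map_add φ (a : Diag Hom Z) (b : Diag Hom Z)).trans (by exact (congrArg₂ (· + ·) ha hb).trans (add_zero 0))
        zero_mem' := by
          simp only [Set.mem_setOf_eq]
          exact map_zero φ
        smul_mem' := by
          intro c x hx
          simp only [Set.mem_setOf_eq] at *
          rw [phi_smul, hx, mul_zero] } with hK
    have hsub : {z : Hom Z Z | ∃ (x : Hom Z A) (y : Hom A Z), z = CStarCat.comp x y}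
        ⊆ (K : Set (Hom Z Z)) := by
      rintro _ ⟨x, y, rfl⟩
      show φ ((comp x y : Hom Z Z) : Diag Hom Z) = 0
      have h1 : inn Z φ (invol x) y = φ ((comp x y : Hom Z Z) : Diag Hom Z) := by
        unfold inn
        rw [invol_invol]
      rw [← h1]
      exact inn_degenerate φ (hall (invol x)) y
    have hclosed : IsClosed (K : Set (Hom Z Z)) := by
      have : (K : Set (Hom Z Z))
          = (fun d : Hom Z Z => φ ((d : Hom Z Z) : Diag Hom Z)) ⁻¹' {0} := rfl
      rw [this]
      exact IsClosed.preimage (map_continuous φ) isClosed_singleton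
    have hspan : ((Submodule.span ℂ
        {z : Hom Z Z | ∃ (x : Hom Z A) (y : Hom A Z), z = CStarCat.comp x y} :
          Submodule ℂ (Hom Z Z)) : Set (Hom Z Z)) ⊆ (K : Set (Hom Z Z)) :=
      Submodule.span_le.mpr hsub
    have huniv : (Set.univ : Set (Hom Z Z)) ⊆ (K : Set (Hom Z Z)) := by
      rw [← hfZA]
      exact closure_minimal hspan hclosed
    have h1 : φ ((ide Z : Hom Z Z) : Diag Hom Z) = 0 := huniv (Set.mem_univ _)
    rw [phi_one] at h1
    exact one_ne_zero h1
  obtain ⟨u, hu⟩ := hnz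
  obtain ⟨r, hr0, hr⟩ := inn_self_real φ u
  have hrne : r ≠ 0 := by
    rintro rfl
    exact hu (by rw [hr]; simp)
  have hrpos : 0 < r := lt_of_le_of_ne hr0 (Ne.symm hrne)
  refine ⟨((Real.sqrt r : ℝ) : ℂ)⁻¹ • u, ?_⟩
  rw [inn_smul_left, inn_smul_right, hr]
  have hc : conj (((Real.sqrt r : ℝ) : ℂ)⁻¹) = ((Real.sqrt r : ℝ) : ℂ)⁻¹ := by
    rw [map_inv₀, Complex.conj_ofReal]
  rw [hc]
  have hs : Real.sqrt r ≠ 0 := by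
    rw [Real.sqrt_ne_zero hr0]
    exact hrne
  have hmul : ((Real.sqrt r : ℝ) : ℂ) * ((Real.sqrt r : ℝ) : ℂ) = (r : ℂ) := by
    rw [← Complex.ofReal_mul, Real.mul_self_sqrt hr0]
  rw [← mul_assoc, ← mul_inv, hmul]
  exact inv_mul_cancel₀ (by exact_mod_cast hrne)

end InnerChar
section GChar

open CStarCat WeakDual

variable {O : Type*} {Hom : O → O → Type*}
  [∀ A B, NormedAddCommGroup (Hom A B)] [∀ A B, NormedSpace ℂ (Hom A B)]
  [CStarCat O Hom]

theorem inn_adjoint {Z : O} (φ : characterSpace ℂ (Diag Hom Z)) {A B : O}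
    (f : Hom A B) (y : Hom A Z) (z : Hom B Z) :
    inn Z φ y (comp f z) = inn Z φ (comp (invol f) y) z := by
  unfold inn
  rw [invol_comp, invol_invol, CStarCat.comp_assoc]

/-- A choice of a unit vector in each `Hom A Z` for the localized inner product. -/
noncomputable def eFam (hf : IsFull O Hom) (Z : O)
    (φ : characterSpace ℂ (Diag Hom Z)) (A : O) : Hom A Z :=
  Classical.choose (exists_unit_vec φ A (hf Z A))

theorem eFam_spec (hf : IsFull O Hom) (Z : O)
    (φ : characterSpace ℂ (Diag Hom Z)) (A : O) :
    inn Z φ (eFam hf Z φ A) (eFam hf Z φ A) = 1 :=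
  Classical.choose_spec (exists_unit_vec φ A (hf Z A))

/-- The ℂ-valued *-functor on the whole C*-category extending (up to normalization)
a character `φ` of the diagonal C*-algebra at `Z`. -/
noncomputable def gchar (hc : IsCommutative O Hom) (hf : IsFull O Hom) (Z : O)
    (φ : characterSpace ℂ (Diag Hom Z)) : CChar O Hom where
  ω {A B} f := inn Z φ (eFam hf Z φ A) (comp f (eFam hf Z φ B))
  map_add {A B} x y := by
    rw [CStarCat.comp_add_left, inn_add_right]
  map_smul {A B} c x := by
    rw [CStarCat.comp_smul_left, inn_smul_right]
  map_ide A := by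
    rw [CStarCat.ide_comp]
    exact eFam_spec hf Z φ A
  map_invol {A B} x := by
    rw [inn_adjoint, invol_invol, ← inn_conj, inn_adjoint]
  map_comp {A B C} f g := by
    set e := eFam hf Z φ with he
    set w : Hom B Z := comp (invol f) (e A) with hw
    set v : Hom B Z := comp g (e C) with hv
    have hL : inn Z φ (e A) (comp (comp f g) (e C)) = inn Z φ w v := by
      rw [CStarCat.comp_assoc, inn_adjoint, ← hv]
    have hf' : inn Z φ (e A) (comp f (e B)) = inn Z φ w (e B) := by
      rw [inn_adjoint]
    have hg' : inn Z φ (e B) (comp g (e C)) = inn Z φ (e B) v := rfl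
    rw [hL, hf', hg']
    -- one-dimensionality argument
    set c : ℂ := inn Z φ (e B) w with hcdef
    set w' : Hom B Z := w - c • e B with hw'
    have h1 : inn Z φ (e B) w' = 0 := by
      rw [hw', inn_sub_right, inn_smul_right, eFam_spec hf Z φ B, mul_one, ← hcdef, sub_self]
    have h2 : inn Z φ w' w' = 0 := inn_rankone φ (hc B) (eFam_spec hf Z φ B) h1
    have h3 : inn Z φ w' v = 0 := inn_degenerate φ h2 v
    have h4 : inn Z φ w' (e B) = 0 := inn_degenerate φ h2 (e B)
    have hwsum : w = w' + c • e B := by rw [hw']; abel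
    have hwe : inn Z φ w (e B) = conj c := by
      rw [hwsum, inn_add_left, h4, inn_smul_left, eFam_spec hf Z φ B, mul_one, zero_add]
    have hwv : inn Z φ w v = conj c * inn Z φ (e B) v := by
      rw [hwsum, inn_add_left, h3, inn_smul_left, zero_add]
    rw [hwv, hwe]

theorem gchar_diag (hc : IsCommutative O Hom) (hf : IsFull O Hom) (Z : O)
    (φ : characterSpace ℂ (Diag Hom Z)) (d : Hom Z Z) :
    (gchar hc hf Z φ).ω d = φ ((d : Hom Z Z) : Diag Hom Z) := by
  show inn Z φ (eFam hf Z φ Z) (comp d (eFam hf Z φ Z)) = φ ((d : Hom Z Z) : Diag Hom Z)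
  have h1 : φ ((invol (eFam hf Z φ Z) : Hom Z Z) : Diag Hom Z)
      * φ ((eFam hf Z φ Z : Hom Z Z) : Diag Hom Z) = 1 := by
    rw [← phi_comp]
    exact eFam_spec hf Z φ Z
  unfold inn
  rw [phi_comp, phi_comp]
  linear_combination φ ((d : Hom Z Z) : Diag Hom Z) * h1

theorem cchar_norm_le (ω : CChar O Hom) {A B : O} (f : Hom A B) : ‖ω.ω f‖ ≤ ‖f‖ := by
  by_cases hB : (ide B : Hom B B) = 0
  · have hf0 : f = 0 := by
      rw [← CStarCat.comp_ide (Hom := Hom) f, hB, comp_zero_right']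
    rw [hf0, cchar_map_zero]
    simp
  · haveI : Nontrivial (Diag Hom B) := ⟨⟨(ide B : Hom B B), 0, hB⟩⟩
    haveI : NormOneClass (Diag Hom B) := by
      refine ⟨?_⟩
      have h := norm_invol_comp (Hom := Hom) (ide B : Hom B B)
      rw [invol_ide', CStarCat.ide_comp] at h
      have hn : ‖(ide B : Hom B B)‖ ≠ 0 := norm_ne_zero_iff.mpr hB
      have h1 : ‖(1 : Diag Hom B)‖ = ‖(ide B : Hom B B)‖ := rfl
      rw [h1]
      have h2 : ‖(ide B : Hom B B)‖ * (‖(ide B : Hom B B)‖ - 1) = 0 := by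
        have : ‖(ide B : Hom B B)‖ ^ 2 - ‖(ide B : Hom B B)‖ = 0 := by linarith
        nlinarith [this]
      rcases mul_eq_zero.mp h2 with h3 | h3
      · exact absurd h3 hn
      · linarith
    let ψ : Diag Hom B →ₐ[ℂ] ℂ :=
      { toFun := fun d => ω.ω ((d : Diag Hom B) : Hom B B)
        map_one' := ω.map_ide B
        map_mul' := fun x y => ω.map_comp x y
        map_zero' := cchar_map_zero ω
        map_add' := fun x y => ω.map_add x y
        commutes' := fun c => by
          have halg : (algebraMap ℂ (Diag Hom B)) c = c • (1 : Diag Hom B) :=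
            Algebra.algebraMap_eq_smul_one c
          show ω.ω (((algebraMap ℂ (Diag Hom B)) c : Diag Hom B) : Hom B B) = _
          rw [halg]
          have : ω.ω ((c • (1 : Diag Hom B) : Diag Hom B) : Hom B B)
              = ω.ω (c • (ide B : Hom B B)) := rfl
          rw [this, ω.map_smul, ω.map_ide, mul_one]
          simp [Algebra.algebraMap_self] }
    have hspec : ∀ d : Diag Hom B, ‖ψ d‖ ≤ ‖d‖ := fun d =>
      spectrum.norm_le_norm_of_mem (AlgHom.apply_mem_spectrum ψ d)
    set d : Diag Hom B := ((comp (invol f) f : Hom B B) : Diag Hom B) with hd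
    have h2 := hspec d
    have h3 : ψ d = conj (ω.ω f) * ω.ω f := by
      show ω.ω (comp (invol f) f) = _
      rw [ω.map_comp, ω.map_invol]
    have h4 : ‖d‖ = ‖f‖ ^ 2 := norm_invol_comp (Hom := Hom) f
    have h5 : ‖conj (ω.ω f) * ω.ω f‖ = ‖ω.ω f‖ ^ 2 := by
      rw [norm_mul, RCLike.norm_conj]
      ring
    rw [h3, h4, h5] at h2
    nlinarith [norm_nonneg (ω.ω f), norm_nonneg f, h2]

end GChar
open CStarCat WeakDual in
/-- The Gelfand transform of a full commutative C*-category, sending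
x ∈ C_{AB} to the section [ω] ↦ x + I_ω of the spectral spaceoid, is isometric on every
Hom space (the sup of the fiberwise quotient norms equals ‖x‖) and faithful. -/
theorem gelfand_transform_isometric_faithful
    (hc : IsCommutative O Hom) (hf : IsFull O Hom) :
    ∀ (A B : O) (x : Hom A B),
      (⨆ ω : CChar O Hom,
        ‖(Submodule.Quotient.mk x : Hom A B ⧸ kerIdeal ω A B)‖) = ‖x‖ ∧
      ((∀ ω : CChar O Hom,
        (Submodule.Quotient.mk x : Hom A B ⧸ kerIdeal ω A B) = 0) → x = 0) := by
  intro A B x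
  by_cases hx : x = 0
  · subst hx
    constructor
    · have hz : ∀ ω : CChar O Hom,
          ‖(Submodule.Quotient.mk (0 : Hom A B) : Hom A B ⧸ kerIdeal ω A B)‖ = 0 := by
        intro ω
        rw [Submodule.Quotient.mk_zero, norm_zero]
      rw [norm_zero]
      rcases isEmpty_or_nonempty (CChar O Hom) with hE | hN
      · exact Real.iSup_of_isEmpty _
      · simp only [hz]
        exact ciSup_const
    · intro _; rfl
  · letI : NormedCommRing (Diag Hom B) :=
      { instDiagNormedRing (Hom := Hom) B with mul_comm := fun a b => hc B a b }
    letI : CommCStarAlgebra (Diag Hom B) :=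
      { instDiagCStarAlgebra (Hom := Hom) B with mul_comm := fun a b => hc B a b }
    have hide : (ide B : Hom B B) ≠ 0 := by
      intro h0
      exact hx (by rw [← CStarCat.comp_ide (Hom := Hom) x, h0, comp_zero_right'])
    haveI : Nontrivial (Diag Hom B) := ⟨⟨(ide B : Hom B B), 0, hide⟩⟩
    set a : Diag Hom B := ((comp (invol x) x : Hom B B) : Diag Hom B) with ha
    have hGa : ‖gelfandTransform ℂ (Diag Hom B) a‖ = ‖a‖ :=
      (gelfandTransform_isometry (Diag Hom B)).norm_map_of_map_zero (map_zero _) a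
    obtain ⟨φ₀, -, hφ₀⟩ := isCompact_univ.exists_isMaxOn Set.univ_nonempty
      (Continuous.continuousOn ((gelfandTransform ℂ (Diag Hom B) a).continuous.norm))
    have hge : ‖a‖ ≤ ‖φ₀ a‖ := by
      rw [← hGa]
      refine (ContinuousMap.norm_le _ (norm_nonneg _)).mpr ?_
      intro ψ
      have h := hφ₀ (Set.mem_univ ψ)
      simpa using h
    set ω₀ := gchar hc hf B φ₀ with hω₀
    have hres : ω₀.ω (comp (invol x) x : Hom B B) = φ₀ a := gchar_diag hc hf B φ₀ _
    have hx2 : ‖ω₀.ω x‖ ^ 2 = ‖φ₀ a‖ := by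
      have hsplit : ω₀.ω (comp (invol x) x) = conj (ω₀.ω x) * ω₀.ω x := by
        rw [ω₀.map_comp, ω₀.map_invol]
      calc ‖ω₀.ω x‖ ^ 2 = ‖conj (ω₀.ω x) * ω₀.ω x‖ := by
            rw [norm_mul, RCLike.norm_conj]; ring
        _ = ‖ω₀.ω (comp (invol x) x)‖ := by rw [hsplit]
        _ = ‖φ₀ a‖ := by rw [hres]
    have hA : ‖a‖ = ‖x‖ ^ 2 := norm_invol_comp (Hom := Hom) x
    have hnorm : ‖ω₀.ω x‖ = ‖x‖ := by
      have hle := cchar_norm_le ω₀ x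
      refine le_antisymm hle ?_
      nlinarith [norm_nonneg (ω₀.ω x), norm_nonneg x, hge, hx2, hA]
    have hlow : ∀ ω : CChar O Hom,
        ‖ω.ω x‖ ≤ ‖(Submodule.Quotient.mk x : Hom A B ⧸ kerIdeal ω A B)‖ := by
      intro ω
      by_contra hlt
      push_neg at hlt
      obtain ⟨m, hm, hmlt⟩ := Submodule.Quotient.norm_mk_lt
        (Submodule.Quotient.mk x : Hom A B ⧸ kerIdeal ω A B) (sub_pos.mpr hlt)
      have hmem : m - x ∈ kerIdeal ω A B := (Submodule.Quotient.eq _).mp hm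
      have h0 : ω.ω (m - x) = 0 := hmem
      have hmx : ω.ω m = ω.ω x := by
        rw [cchar_map_sub] at h0
        exact sub_eq_zero.mp h0
      have hle := cchar_norm_le ω m
      rw [hmx] at hle
      linarith
    have hup : ∀ ω : CChar O Hom,
        ‖(Submodule.Quotient.mk x : Hom A B ⧸ kerIdeal ω A B)‖ ≤ ‖x‖ := fun ω =>
      Submodule.Quotient.norm_mk_le _ x
    haveI : Nonempty (CChar O Hom) := ⟨ω₀⟩
    have hbdd : BddAbove (Set.range fun ω : CChar O Hom =>
        ‖(Submodule.Quotient.mk x : Hom A B ⧸ kerIdeal ω A B)‖) := by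
      refine ⟨‖x‖, ?_⟩
      rintro r ⟨ω, rfl⟩
      exact hup ω
    constructor
    · refine le_antisymm (ciSup_le hup) ?_
      calc ‖x‖ = ‖ω₀.ω x‖ := hnorm.symm
        _ ≤ ‖(Submodule.Quotient.mk x : Hom A B ⧸ kerIdeal ω₀ A B)‖ := hlow ω₀
        _ ≤ ⨆ ω : CChar O Hom, ‖(Submodule.Quotient.mk x : Hom A B ⧸ kerIdeal ω A B)‖ :=
            le_ciSup hbdd ω₀
    · intro hall
      exfalso
      have h0 : x ∈ kerIdeal ω₀ A B := (Submodule.Quotient.mk_eq_zero _).mp (hall ω₀)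
      have h1 : ω₀.ω x = 0 := h0
      rw [h1, norm_zero] at hnorm
      exact hx (norm_eq_zero.mp hnorm.symm)
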